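/- Let a, b > 0 and let f, g be entire functions with ‖f‖_a < ∞ and ‖g‖_b < ∞, where ‖f‖_b := sup_{k ∈ ℕ₀} b^{-k} |f^{(k)}(0)|. Then ‖fg‖_{a+b} ≤ ‖f‖_a ‖g‖_b. -/

import Mathlib

/-- The exponential-type norm ‖f‖_b = sup_{k} b^{-k} |f^{(k)}(0)|. -/
noncomputable def entNorm (b : ℝ) (f : ℂ → ℂ) : ℝ :=
  ⨆ k : ℕ, b⁻¹ ^ k * ‖iteratedDeriv k f 0‖

/-- For entire f, g with ‖f‖_a, ‖g‖_b finite (a, b > 0), ‖fg‖_{a+b} ≤ ‖f‖_a ‖g‖_b. -/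
theorem stmt1 (a b : ℝ) (ha : 0 < a) (hb : 0 < b) (f g : ℂ → ℂ)
    (hf : Differentiable ℂ f) (hg : Differentiable ℂ g)
    (hfa : BddAbove (Set.range fun k : ℕ => a⁻¹ ^ k * ‖iteratedDeriv k f 0‖))
    (hgb : BddAbove (Set.range fun k : ℕ => b⁻¹ ^ k * ‖iteratedDeriv k g 0‖)) :
    BddAbove (Set.range fun k : ℕ =>
        (a + b)⁻¹ ^ k * ‖iteratedDeriv k (fun z => f z * g z) 0‖) ∧
    entNorm (a + b) (fun z => f z * g z) ≤ entNorm a f * entNorm b g := by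
  have hab : (0:ℝ) < a + b := by linarith
  set Mf := entNorm a f with hMf
  set Mg := entNorm b g with hMg
  have hfle : ∀ i : ℕ, ‖iteratedDeriv i f 0‖ ≤ a ^ i * Mf := by
    intro i
    have h := le_ciSup hfa i
    have : a⁻¹ ^ i * ‖iteratedDeriv i f 0‖ ≤ Mf := h
    calc ‖iteratedDeriv i f 0‖
        = a ^ i * (a⁻¹ ^ i * ‖iteratedDeriv i f 0‖) := by
          rw [← mul_assoc, ← mul_pow, mul_inv_cancel₀ ha.ne', one_pow, one_mul]
      _ ≤ a ^ i * Mf := by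
          exact mul_le_mul_of_nonneg_left this (by positivity)
  have hgle : ∀ i : ℕ, ‖iteratedDeriv i g 0‖ ≤ b ^ i * Mg := by
    intro i
    have h := le_ciSup hgb i
    have : b⁻¹ ^ i * ‖iteratedDeriv i g 0‖ ≤ Mg := h
    calc ‖iteratedDeriv i g 0‖
        = b ^ i * (b⁻¹ ^ i * ‖iteratedDeriv i g 0‖) := by
          rw [← mul_assoc, ← mul_pow, mul_inv_cancel₀ hb.ne', one_pow, one_mul]
      _ ≤ b ^ i * Mg := by
          exact mul_le_mul_of_nonneg_left this (by positivity)
  have hMf0 : 0 ≤ Mf := le_trans (by positivity) (hfle 0 |>.trans (by simp))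
  have hMg0 : 0 ≤ Mg := le_trans (by positivity) (hgle 0 |>.trans (by simp))
  have key : ∀ k : ℕ,
      (a + b)⁻¹ ^ k * ‖iteratedDeriv k (fun z => f z * g z) 0‖ ≤ Mf * Mg := by
    intro k
    have hcf : ContDiff ℂ ⊤ f := hf.contDiff
    have hcg : ContDiff ℂ ⊤ g := hg.contDiff
    have hleib := norm_iteratedFDeriv_mul_le (𝕜 := ℂ) hcf hcg (0 : ℂ) (n := k) le_top
    rw [norm_iteratedFDeriv_eq_norm_iteratedDeriv] at hleib
    have hsum : ∑ i ∈ Finset.range (k + 1),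
        (k.choose i : ℝ) * ‖iteratedFDeriv ℂ i f 0‖ * ‖iteratedFDeriv ℂ (k - i) g 0‖ ≤
        (a + b) ^ k * (Mf * Mg) := by
      have hpow : (a + b) ^ k = ∑ i ∈ Finset.range (k + 1),
          a ^ i * b ^ (k - i) * (k.choose i : ℝ) := add_pow a b k
      rw [hpow, Finset.sum_mul]
      apply Finset.sum_le_sum
      intro i _
      rw [norm_iteratedFDeriv_eq_norm_iteratedDeriv, norm_iteratedFDeriv_eq_norm_iteratedDeriv]
      calc (k.choose i : ℝ) * ‖iteratedDeriv i f 0‖ *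
            ‖iteratedDeriv (k - i) g 0‖
          ≤ (k.choose i : ℝ) * (a ^ i * Mf) * (b ^ (k - i) * Mg) := by
            apply mul_le_mul
            · exact mul_le_mul_of_nonneg_left (hfle i) (by positivity)
            · exact hgle (k - i)
            · positivity
            · positivity
        _ = a ^ i * b ^ (k - i) * (k.choose i : ℝ) * (Mf * Mg) := by ring
    have habk : (a + b)⁻¹ ^ k * ((a + b) ^ k * (Mf * Mg)) = Mf * Mg := by
      rw [← mul_assoc, ← mul_pow, inv_mul_cancel₀ (ne_of_gt hab), one_pow, one_mul]
    calc (a + b)⁻¹ ^ k * ‖iteratedDeriv k (fun z => f z * g z) 0‖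
        = (a + b)⁻¹ ^ k * ‖iteratedDeriv k (fun z => f z * g z) 0‖ := by
          rfl
      _ ≤ (a + b)⁻¹ ^ k * ((a + b) ^ k * (Mf * Mg)) := by
          exact mul_le_mul_of_nonneg_left (hleib.trans hsum) (by positivity)
      _ = Mf * Mg := habk
  refine ⟨⟨Mf * Mg, ?_⟩, ?_⟩
  · rintro x ⟨k, rfl⟩
    exact key k
  · exact ciSup_le key
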